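/- arXiv:2303.00140 — 3 statements merged into one kernel-verified Lean document; each statement's English description precedes it below -/
import Mathlib

section
/- Let q, a, b, λ, β, D be real numbers with q ≥ 1, a ≥ 1, b > 0, λ > 0, β > 0, D > 0, and set r = a + b; assume r ≥ q. Let φ, k, M : ℝ → ℝ be functions such that for all sufficiently large p one has φ(p) > 0, k(p) > 0, M(p) > 0 and λ·φ(p)^(q−1)·(φ(p)/M(p))^(p−q) + β·φ(p)^(a−1)·k(p)^b·(φ(p)/M(p))^(p−r) = 1/2. If φ(p) → D and k(p) → 1 as p → +∞, then φ(p)/M(p) → 1 and M(p) → D as p → +∞. -/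
open Filter Real

/-- Abstract form of Lemma 4.5 (first conclusions): if for large `p`,
`λ·φ(p)^(q−1)·(φ(p)/M(p))^(p−q) + β·φ(p)^(a−1)·k(p)^b·(φ(p)/M(p))^(p−(a+b)) = 1/2`
with `φ(p) → D > 0` and `k(p) → 1`, then `φ(p)/M(p) → 1` and `M(p) → D`. -/
theorem stmt_7 (q a b lam β D : ℝ) (hq : 1 ≤ q) (ha : 1 ≤ a) (hb : 0 < b)
    (hlam : 0 < lam) (hβ : 0 < β) (hD : 0 < D) (hr : q ≤ a + b)
    (φ k M : ℝ → ℝ)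
    (hEq : ∀ᶠ p in Filter.atTop, 0 < φ p ∧ 0 < k p ∧ 0 < M p ∧
      lam * (φ p) ^ (q - 1) * (φ p / M p) ^ (p - q) +
        β * (φ p) ^ (a - 1) * (k p) ^ b * (φ p / M p) ^ (p - (a + b)) = 1 / 2)
    (hφ : Filter.Tendsto φ Filter.atTop (nhds D))
    (hk : Filter.Tendsto k Filter.atTop (nhds 1)) :
    Filter.Tendsto (fun p => φ p / M p) Filter.atTop (nhds 1) ∧
      Filter.Tendsto M Filter.atTop (nhds D) := by
  set r := a + b with hrdef
  -- constants
  have hCpos : (0:ℝ) < (2 * lam * (D/2) ^ (q-1))⁻¹ := by positivity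
  set C : ℝ := (2 * lam * (D/2) ^ (q-1))⁻¹ with hCdef
  have hC'pos : (0:ℝ) < lam * (2*D) ^ (q-1) + β * (2*D) ^ (a-1) * (2:ℝ) ^ b := by positivity
  set C' : ℝ := lam * (2*D) ^ (q-1) + β * (2*D) ^ (a-1) * (2:ℝ) ^ b with hC'def
  have hcpos : (0:ℝ) < (2 * C')⁻¹ := by positivity
  set c : ℝ := (2 * C')⁻¹ with hcdef
  -- eventual bounds on φ and k
  have hφlo : ∀ᶠ p in atTop, D/2 ≤ φ p :=
    hφ.eventually (eventually_ge_nhds (by linarith))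
  have hφhi : ∀ᶠ p in atTop, φ p ≤ 2*D :=
    hφ.eventually (eventually_le_nhds (by linarith))
  have hkhi : ∀ᶠ p in atTop, k p ≤ 2 :=
    hk.eventually (eventually_le_nhds (by norm_num))
  have hplarge : ∀ᶠ p in atTop, r < p := eventually_gt_atTop r
  -- main sandwich
  have hsand : ∀ᶠ p in atTop,
      min 1 (c ^ (p - r)⁻¹) ≤ φ p / M p ∧ φ p / M p ≤ max 1 (C ^ (p - q)⁻¹) := by
    filter_upwards [hEq, hφlo, hφhi, hkhi, hplarge] with p hp hlo hhi hk2 hpr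
    obtain ⟨hφp, hkp, hMp, heq⟩ := hp
    have hpq : q < p := lt_of_le_of_lt hr hpr
    set x := φ p / M p with hxdef
    have hx : 0 < x := div_pos hφp hMp
    have ht1 : 0 < lam * (φ p) ^ (q - 1) * x ^ (p - q) := by positivity
    have ht2 : 0 < β * (φ p) ^ (a - 1) * (k p) ^ b * x ^ (p - r) := by positivity
    constructor
    · -- lower bound
      rcases le_or_gt 1 x with h1 | h1
      · exact le_trans (min_le_left _ _) h1
      · refine le_trans (min_le_right _ _) ?_
        -- x^(p-q) ≤ x^(p-r)
        have hmono : x ^ (p - q) ≤ x ^ (p - r) :=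
          rpow_le_rpow_of_exponent_ge hx h1.le (by linarith)
        have hφq : (φ p) ^ (q-1) ≤ (2*D) ^ (q-1) :=
          rpow_le_rpow hφp.le hhi (by linarith)
        have hφa : (φ p) ^ (a-1) ≤ (2*D) ^ (a-1) :=
          rpow_le_rpow hφp.le hhi (by linarith)
        have hkb : (k p) ^ b ≤ (2:ℝ) ^ b := rpow_le_rpow hkp.le hk2 hb.le
        have hxr : 0 < x ^ (p - r) := rpow_pos_of_pos hx _
        have hxq : 0 ≤ x ^ (p - q) := (rpow_pos_of_pos hx _).le
        have key : (1:ℝ)/2 ≤ C' * x ^ (p - r) := by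
          rw [← heq]
          have h1' : lam * (φ p) ^ (q - 1) * x ^ (p - q)
              ≤ lam * (2*D) ^ (q-1) * x ^ (p - r) := by
            calc lam * (φ p) ^ (q - 1) * x ^ (p - q)
                ≤ lam * (φ p) ^ (q - 1) * x ^ (p - r) := by
                  apply mul_le_mul_of_nonneg_left hmono (by positivity)
              _ ≤ lam * (2*D) ^ (q-1) * x ^ (p - r) := by
                  apply mul_le_mul_of_nonneg_right _ hxr.le
                  exact mul_le_mul_of_nonneg_left hφq hlam.le
          have h2' : β * (φ p) ^ (a - 1) * (k p) ^ b * x ^ (p - r)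
              ≤ β * (2*D) ^ (a-1) * (2:ℝ) ^ b * x ^ (p - r) := by
            apply mul_le_mul_of_nonneg_right _ hxr.le
            have : β * (φ p) ^ (a - 1) ≤ β * (2*D) ^ (a-1) :=
              mul_le_mul_of_nonneg_left hφa hβ.le
            exact mul_le_mul this hkb (by positivity) (by positivity)
          calc lam * (φ p) ^ (q - 1) * x ^ (p - q)
                + β * (φ p) ^ (a - 1) * (k p) ^ b * x ^ (p - r)
              ≤ lam * (2*D) ^ (q-1) * x ^ (p - r)
                + β * (2*D) ^ (a-1) * (2:ℝ) ^ b * x ^ (p - r) := add_le_add h1' h2'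
            _ = C' * x ^ (p - r) := by rw [hC'def]; ring
        have hcx : c ≤ x ^ (p - r) := by
          rw [hcdef]
          rw [← div_le_iff₀' hC'pos] at key
          calc (2*C')⁻¹ = 1/2/C' := by field_simp
            _ ≤ x ^ (p - r) := key
        have hprpos : (0:ℝ) < p - r := by linarith
        calc c ^ (p - r)⁻¹ ≤ (x ^ (p - r)) ^ (p - r)⁻¹ :=
              rpow_le_rpow hcpos.le hcx (by positivity)
          _ = x := Real.rpow_rpow_inv hx.le hprpos.ne'
    · -- upper bound
      rcases le_or_gt x 1 with h1 | h1
      · exact le_trans h1 (le_max_left _ _)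
      · refine le_trans ?_ (le_max_right _ _)
        have hφq : (D/2) ^ (q-1) ≤ (φ p) ^ (q-1) :=
          rpow_le_rpow (by positivity) hlo (by linarith)
        have hT1 : lam * (φ p) ^ (q - 1) * x ^ (p - q) ≤ 1/2 := by linarith
        have hxC : x ^ (p - q) ≤ C := by
          have hlow : lam * (D/2) ^ (q-1) * x ^ (p - q)
              ≤ lam * (φ p) ^ (q - 1) * x ^ (p - q) := by
            apply mul_le_mul_of_nonneg_right _ (rpow_pos_of_pos hx _).le
            exact mul_le_mul_of_nonneg_left hφq hlam.le
          have h2 : lam * (D/2) ^ (q-1) * x ^ (p - q) ≤ 1/2 := le_trans hlow hT1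
          rw [hCdef]
          have hpos : (0:ℝ) < lam * (D/2) ^ (q-1) := by positivity
          rw [mul_comm, ← le_div_iff₀ hpos] at h2
          calc x ^ (p - q) ≤ 1/2 / (lam * (D/2) ^ (q-1)) := h2
            _ = (2 * lam * (D/2) ^ (q-1))⁻¹ := by field_simp
        have hpqpos : (0:ℝ) < p - q := by linarith
        calc x = (x ^ (p - q)) ^ (p - q)⁻¹ :=
              (Real.rpow_rpow_inv hx.le hpqpos.ne').symm
          _ ≤ C ^ (p - q)⁻¹ := rpow_le_rpow (by positivity) hxC (by positivity)
  -- tendsto of the bounds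
  have hinvq : Tendsto (fun p : ℝ => (p - q)⁻¹) atTop (nhds 0) :=
    tendsto_inv_atTop_zero.comp (tendsto_atTop_add_const_right _ (-q) tendsto_id)
  have hinvr : Tendsto (fun p : ℝ => (p - r)⁻¹) atTop (nhds 0) :=
    tendsto_inv_atTop_zero.comp (tendsto_atTop_add_const_right _ (-r) tendsto_id)
  have hup : Tendsto (fun p : ℝ => max 1 (C ^ (p - q)⁻¹)) atTop (nhds 1) := by
    have : Tendsto (fun p : ℝ => C ^ (p - q)⁻¹) atTop (nhds 1) := by
      have := (tendsto_const_nhds : Tendsto (fun _ : ℝ => C) atTop (nhds C)).rpow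
        hinvq (Or.inl hCpos.ne')
      simpa using this
    simpa using (tendsto_const_nhds.max this :
      Tendsto (fun p : ℝ => max 1 (C ^ (p - q)⁻¹)) atTop (nhds (max 1 1)))
  have hlow : Tendsto (fun p : ℝ => min 1 (c ^ (p - r)⁻¹)) atTop (nhds 1) := by
    have : Tendsto (fun p : ℝ => c ^ (p - r)⁻¹) atTop (nhds 1) := by
      have := (tendsto_const_nhds : Tendsto (fun _ : ℝ => c) atTop (nhds c)).rpow
        hinvr (Or.inl hcpos.ne')
      simpa using this
    simpa using (tendsto_const_nhds.min this :
      Tendsto (fun p : ℝ => min 1 (c ^ (p - r)⁻¹)) atTop (nhds (min 1 1)))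
  have hx1 : Tendsto (fun p => φ p / M p) atTop (nhds 1) :=
    tendsto_of_tendsto_of_tendsto_of_le_of_le' hlow hup
      (hsand.mono fun p hp => hp.1) (hsand.mono fun p hp => hp.2)
  refine ⟨hx1, ?_⟩
  have hMeq : ∀ᶠ p in atTop, φ p / (φ p / M p) = M p := by
    filter_upwards [hEq] with p hp
    rw [div_div_eq_mul_div, mul_comm, mul_div_assoc, div_self hp.1.ne', mul_one]
  have : Tendsto (fun p => φ p / (φ p / M p)) atTop (nhds (D / 1)) := hφ.div hx1 one_ne_zero
  rw [div_one] at this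
  exact this.congr' hMeq
end

section
/- Let q, a, b, λ, β, D be real numbers with q ≥ 1, a ≥ 1, b > 0, λ > 0, β > 0, D > 0, and set r = a + b; assume r ≥ q. Let φ, k, M : ℝ → ℝ be functions such that for all sufficiently large p one has φ(p) > 0, k(p) > 0, M(p) > 0 and λ·φ(p)^(q−1)·(φ(p)/M(p))^(p−q) + β·φ(p)^(a−1)·k(p)^b·(φ(p)/M(p))^(p−r) = 1/2. If φ(p) → D and k(p) → 1 as p → +∞, then (φ(p)/M(p))^p → 1/(2·(λ·D^(q−1) + β·D^(a−1))) as p → +∞. -/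
open Filter Real

private lemma rpow_bound_upper {t s C : ℝ} (ht : 0 < t) (hs : 0 < s)
    (h : t ^ s ≤ C) : t ≤ C ^ s⁻¹ := by
  have h0 : (0:ℝ) ≤ t ^ s := (Real.rpow_pos_of_pos ht s).le
  have := Real.rpow_le_rpow h0 h (by positivity : (0:ℝ) ≤ s⁻¹)
  rwa [← Real.rpow_mul ht.le, mul_inv_cancel₀ hs.ne', Real.rpow_one] at this

private lemma rpow_bound_lower {t s c : ℝ} (ht : 0 < t) (hs : 0 < s) (hc : 0 ≤ c)
    (h : c ≤ t ^ s) : c ^ s⁻¹ ≤ t := by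
  have := Real.rpow_le_rpow hc h (by positivity : (0:ℝ) ≤ s⁻¹)
  rwa [← Real.rpow_mul ht.le, mul_inv_cancel₀ hs.ne', Real.rpow_one] at this

/-- Abstract form of Lemma 4.5 (second conclusion): under the same hypotheses,
`(φ(p)/M(p))^p → 1/(2·(λ·D^(q−1) + β·D^(a−1)))` as `p → +∞`. -/
theorem stmt_8 (q a b lam β D : ℝ) (hq : 1 ≤ q) (ha : 1 ≤ a) (hb : 0 < b)
    (hlam : 0 < lam) (hβ : 0 < β) (hD : 0 < D) (hr : q ≤ a + b)
    (φ k M : ℝ → ℝ)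
    (hEq : ∀ᶠ p in Filter.atTop, 0 < φ p ∧ 0 < k p ∧ 0 < M p ∧
      lam * (φ p) ^ (q - 1) * (φ p / M p) ^ (p - q) +
        β * (φ p) ^ (a - 1) * (k p) ^ b * (φ p / M p) ^ (p - (a + b)) = 1 / 2)
    (hφ : Filter.Tendsto φ Filter.atTop (nhds D))
    (hk : Filter.Tendsto k Filter.atTop (nhds 1)) :
    Filter.Tendsto (fun p => (φ p / M p) ^ p) Filter.atTop
      (nhds (1 / (2 * (lam * D ^ (q - 1) + β * D ^ (a - 1))))) := by
  have hq0 : (0:ℝ) ≤ q - 1 := by linarith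
  have ha0 : (0:ℝ) ≤ a - 1 := by linarith
  set r : ℝ := a + b with hrdef
  set A : ℝ := lam * (2*D) ^ (q-1) with hA
  set B : ℝ := β * (2*D) ^ (a-1) * 2 ^ b with hB
  have hApos : 0 < A := by positivity
  have hBpos : 0 < B := by positivity
  set C : ℝ := max ((2 * lam * (D/2) ^ (q-1))⁻¹) 1 with hCdef
  have hC1 : (1:ℝ) ≤ C := le_max_right _ _
  have hCpos : 0 < C := lt_of_lt_of_le one_pos hC1
  set c : ℝ := min ((2*(A+B))⁻¹) 1 with hcdef
  have hcpos : 0 < c := lt_min (by positivity) one_pos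
  have hc1 : c ≤ 1 := min_le_right _ _
  -- eventual bounds
  have hφlow : ∀ᶠ p in atTop, D/2 < φ p := hφ.eventually (eventually_gt_nhds (by linarith))
  have hφhigh : ∀ᶠ p in atTop, φ p < 2*D := hφ.eventually (eventually_lt_nhds (by linarith))
  have hkhigh : ∀ᶠ p in atTop, k p < 2 := hk.eventually (eventually_lt_nhds (by norm_num))
  have hplarge : ∀ᶠ p in atTop, r + 1 ≤ p := eventually_ge_atTop _
  -- squeeze bounds for t = φ/M
  have hbound : ∀ᶠ p in atTop,
      c ^ (p - r)⁻¹ ≤ φ p / M p ∧ φ p / M p ≤ C ^ (p - r)⁻¹ := by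
    filter_upwards [hEq, hφlow, hφhigh, hkhigh, hplarge] with p hE hlo hhi hk2 hp
    obtain ⟨hφ0, hk0, hM0, heq⟩ := hE
    set t := φ p / M p with htdef
    have ht : 0 < t := div_pos hφ0 hM0
    have hsr : 0 < p - r := by linarith
    have hsq : 0 < p - q := by linarith
    have hqr : p - r ≤ p - q := by linarith
    have htq : 0 < t ^ (p - q) := Real.rpow_pos_of_pos ht _
    have htr : 0 < t ^ (p - r) := Real.rpow_pos_of_pos ht _
    have hφq : (D/2) ^ (q-1) ≤ φ p ^ (q-1) :=
      Real.rpow_le_rpow (by positivity) hlo.le hq0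
    have hφq' : φ p ^ (q-1) ≤ (2*D) ^ (q-1) :=
      Real.rpow_le_rpow hφ0.le hhi.le hq0
    have hφa' : φ p ^ (a-1) ≤ (2*D) ^ (a-1) :=
      Real.rpow_le_rpow hφ0.le hhi.le ha0
    have hkb : k p ^ b ≤ 2 ^ b := Real.rpow_le_rpow hk0.le hk2.le hb.le
    have hφqpos : 0 < φ p ^ (q-1) := Real.rpow_pos_of_pos hφ0 _
    have hφapos : 0 < φ p ^ (a-1) := Real.rpow_pos_of_pos hφ0 _
    have hkbpos : 0 < k p ^ b := Real.rpow_pos_of_pos hk0 _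
    have hD2pos : (0:ℝ) < (D/2) ^ (q-1) := by positivity
    -- upper bound on t^(p-q)
    have hT2pos : 0 < β * φ p ^ (a-1) * k p ^ b * t ^ (p - r) := by positivity
    have hT1 : lam * (D/2) ^ (q-1) * t ^ (p - q) ≤ 1/2 := by
      have h0 : lam * (D/2) ^ (q-1) * t ^ (p - q) ≤ lam * φ p ^ (q-1) * t ^ (p - q) := by
        apply mul_le_mul_of_nonneg_right _ htq.le
        exact mul_le_mul_of_nonneg_left hφq hlam.le
      linarith
    have htqC : t ^ (p - q) ≤ C := by
      have h1 : t ^ (p - q) ≤ (2 * lam * (D/2) ^ (q-1))⁻¹ := by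
        rw [inv_eq_one_div, le_div_iff₀ (by positivity)]
        have h2 : t ^ (p-q) * (2 * lam * (D/2)^(q-1))
            = 2 * (lam * (D/2)^(q-1) * t^(p-q)) := by ring
        rw [h2]; linarith
      exact h1.trans (le_max_left _ _)
    have hup : t ≤ C ^ (p - r)⁻¹ := by
      have := rpow_bound_upper ht hsq htqC
      refine this.trans ?_
      exact Real.rpow_le_rpow_of_exponent_le hC1
        (by apply inv_anti₀ hsr hqr)
    -- lower bound
    have hkey : c ≤ t ^ (p - q) ∨ c ≤ t ^ (p - r) := by
      by_contra hcon
      push_neg at hcon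
      obtain ⟨h1, h2⟩ := hcon
      have hAB1 : lam * φ p ^ (q-1) * t ^ (p-q) ≤ A * t ^ (p-q) := by
        apply mul_le_mul_of_nonneg_right _ htq.le
        exact mul_le_mul_of_nonneg_left hφq' hlam.le
      have hAB2 : β * φ p ^ (a-1) * k p ^ b * t ^ (p-r) ≤ B * t ^ (p-r) := by
        apply mul_le_mul_of_nonneg_right _ htr.le
        calc β * φ p ^ (a-1) * k p ^ b ≤ β * (2*D) ^ (a-1) * k p ^ b := by
              apply mul_le_mul_of_nonneg_right _ hkbpos.le
              exact mul_le_mul_of_nonneg_left hφa' hβ.le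
          _ ≤ B := by
              rw [hB]; exact mul_le_mul_of_nonneg_left hkb (by positivity)
      have hcAB : c * (A + B) ≤ (2*(A+B))⁻¹ * (A+B) := by
        apply mul_le_mul_of_nonneg_right (min_le_left _ _) (by positivity)
      have : (2*(A+B))⁻¹ * (A+B) = 1/2 := by field_simp
      nlinarith
    have hlow : c ^ (p - r)⁻¹ ≤ t := by
      rcases hkey with h | h
      · have := rpow_bound_lower ht hsq hcpos.le h
        refine le_trans ?_ this
        exact Real.rpow_le_rpow_of_exponent_ge hcpos hc1
          (by apply inv_anti₀ hsr hqr)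
      · exact rpow_bound_lower ht hsr hcpos.le h
    exact ⟨hlow, hup⟩
  -- limits of the squeeze functions
  have hinv : Tendsto (fun p : ℝ => (p - r)⁻¹) atTop (nhds 0) := by
    apply tendsto_inv_atTop_zero.comp
    have h1 : Tendsto (fun p : ℝ => p + (-r)) atTop atTop :=
      tendsto_atTop_add_const_right atTop (-r) tendsto_id
    exact h1.congr (fun p => (sub_eq_add_neg p r).symm)
  have hg : Tendsto (fun p : ℝ => c ^ (p - r)⁻¹) atTop (nhds 1) := by
    have := Filter.Tendsto.rpow (tendsto_const_nhds (x := c)) hinv (Or.inl hcpos.ne')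
    simpa only [Real.rpow_zero] using this
  have hh : Tendsto (fun p : ℝ => C ^ (p - r)⁻¹) atTop (nhds 1) := by
    have := Filter.Tendsto.rpow (tendsto_const_nhds (x := C)) hinv (Or.inl hCpos.ne')
    simpa only [Real.rpow_zero] using this
  have ht1 : Tendsto (fun p => φ p / M p) atTop (nhds 1) :=
    tendsto_of_tendsto_of_tendsto_of_le_of_le' hg hh
      (hbound.mono fun p h => h.1) (hbound.mono fun p h => h.2)
  -- denominator S
  set S : ℝ → ℝ := fun p =>
    lam * φ p ^ (q-1) * (φ p / M p) ^ (-q) + β * φ p ^ (a-1) * k p ^ b * (φ p / M p) ^ (-r)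
    with hSdef
  have heq2 : ∀ᶠ p in atTop, (φ p / M p) ^ p = (1/2) / S p := by
    filter_upwards [hEq] with p hE
    obtain ⟨hφ0, hk0, hM0, heq⟩ := hE
    have ht : 0 < φ p / M p := div_pos hφ0 hM0
    have hSpos : 0 < S p := by
      have h1 : 0 < (φ p / M p) ^ (-q) := Real.rpow_pos_of_pos ht _
      have h2 : 0 < (φ p / M p) ^ (-r) := Real.rpow_pos_of_pos ht _
      have h3 : 0 < φ p ^ (q-1) := Real.rpow_pos_of_pos hφ0 _
      have h4 : 0 < φ p ^ (a-1) := Real.rpow_pos_of_pos hφ0 _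
      have h5 : 0 < k p ^ b := Real.rpow_pos_of_pos hk0 _
      have hx : 0 < lam * φ p ^ (q-1) * (φ p / M p) ^ (-q) :=
        mul_pos (mul_pos hlam h3) h1
      have hy : 0 < β * φ p ^ (a-1) * k p ^ b * (φ p / M p) ^ (-r) :=
        mul_pos (mul_pos (mul_pos hβ h4) h5) h2
      exact add_pos hx hy
    rw [eq_div_iff hSpos.ne']
    have e1 : (φ p / M p) ^ (p - q) = (φ p / M p) ^ p * (φ p / M p) ^ (-q) := by
      rw [sub_eq_add_neg, Real.rpow_add ht]
    have e2 : (φ p / M p) ^ (p - r) = (φ p / M p) ^ p * (φ p / M p) ^ (-r) := by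
      rw [sub_eq_add_neg, Real.rpow_add ht]
    simp only [hSdef]
    rw [e1, e2] at heq
    linear_combination heq
  -- limit of S
  have hφq : Tendsto (fun p => φ p ^ (q-1)) atTop (nhds (D ^ (q-1))) :=
    hφ.rpow_const (Or.inl hD.ne')
  have hφa : Tendsto (fun p => φ p ^ (a-1)) atTop (nhds (D ^ (a-1))) :=
    hφ.rpow_const (Or.inl hD.ne')
  have hkb : Tendsto (fun p => k p ^ b) atTop (nhds 1) := by
    have := hk.rpow_const (p := b) (Or.inl one_ne_zero)
    simpa only [Real.one_rpow] using this
  have htq : Tendsto (fun p => (φ p / M p) ^ (-q)) atTop (nhds 1) := by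
    have := ht1.rpow_const (p := -q) (Or.inl one_ne_zero)
    simpa only [Real.one_rpow] using this
  have htr : Tendsto (fun p => (φ p / M p) ^ (-r)) atTop (nhds 1) := by
    have := ht1.rpow_const (p := -r) (Or.inl one_ne_zero)
    simpa only [Real.one_rpow] using this
  have hS : Tendsto S atTop (nhds (lam * D ^ (q-1) + β * D ^ (a-1))) := by
    have h1 : Tendsto (fun p => lam * φ p ^ (q-1) * (φ p / M p) ^ (-q)) atTop
        (nhds (lam * D ^ (q-1) * 1)) := (tendsto_const_nhds.mul hφq).mul htq
    have h2 : Tendsto (fun p => β * φ p ^ (a-1) * k p ^ b * (φ p / M p) ^ (-r)) atTop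
        (nhds (β * D ^ (a-1) * 1 * 1)) := ((tendsto_const_nhds.mul hφa).mul hkb).mul htr
    rw [show lam * D ^ (q-1) + β * D ^ (a-1)
      = lam * D ^ (q-1) * 1 + β * D ^ (a-1) * 1 * 1 by ring]
    exact h1.add h2
  have hLpos : 0 < lam * D ^ (q-1) + β * D ^ (a-1) := by positivity
  have hfinal : Tendsto (fun p => (1/2 : ℝ) / S p) atTop
      (nhds ((1/2) / (lam * D ^ (q-1) + β * D ^ (a-1)))) :=
    tendsto_const_nhds.div hS hLpos.ne'
  have : (1:ℝ) / (2 * (lam * D ^ (q-1) + β * D ^ (a-1)))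
      = (1/2) / (lam * D ^ (q-1) + β * D ^ (a-1)) := (div_div 1 2 _).symm
  rw [this]
  exact Tendsto.congr' (heq2.mono fun p h => h.symm) hfinal
end

section
/- Let q, a, b, λ, β, D, l be real numbers with q ≥ 1, a ≥ 1, b > 0, λ > 0, β > 0, D > 0, l ≥ 1, and let α, s be nonnegative real numbers; set r = a + b and assume r ≥ q. Let φ, k, M : ℝ → ℝ be functions such that for all sufficiently large p one has φ(p) > 0, k(p) > 0, M(p) > 0 and λ·φ(p)^(q−1)·(φ(p)/M(p))^(p−q) + β·φ(p)^(a−1)·k(p)^b·(φ(p)/M(p))^(p−r) = 1/2, and assume φ(p) → D and k(p) → 1 as p → +∞. Define m(p) = M(p)^(p−l) / (2·φ(p)^(p−1)·e^(α·M(p)^s)). Then m(p) → (λ·D^(q−1) + β·D^(a−1))·D^(1−l)·e^(−α·D^s) as p → +∞. -/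
open Filter Real

lemma aux_rpow_inv_tendsto_one (C : ℝ → ℝ) (L e : ℝ) (hL : 0 < L)
    (hC : Tendsto C atTop (nhds L)) :
    Tendsto (fun p => C p ^ (p - e)⁻¹) atTop (nhds 1) := by
  have hpos : ∀ᶠ p in atTop, 0 < C p := hC.eventually (eventually_gt_nhds hL)
  have hlog : Tendsto (fun p => (p - e)⁻¹ * Real.log (C p)) atTop (nhds 0) := by
    have h1 : Tendsto (fun p : ℝ => (p - e)⁻¹) atTop (nhds 0) :=
      tendsto_inv_atTop_zero.comp (tendsto_atTop_add_const_right _ (-e) tendsto_id)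
    have h2 : Tendsto (fun p => Real.log (C p)) atTop (nhds (Real.log L)) :=
      ((Real.continuousAt_log hL.ne').tendsto).comp hC
    simpa using h1.mul h2
  have := (Real.continuous_exp.tendsto 0).comp hlog
  simp only [Real.exp_zero] at this
  refine Tendsto.congr' ?_ this
  filter_upwards [hpos] with p hp
  simp [Real.rpow_def_of_pos hp, mul_comm]

lemma key_id (q a b lam β l α s p x M kk : ℝ) (hx : 0 < x) (hM : 0 < M)
    (hE : lam * x ^ (q - 1) * (x / M) ^ (p - q) +
      β * x ^ (a - 1) * kk ^ b * (x / M) ^ (p - (a + b)) = 1 / 2) :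
    M ^ (p - l) / (2 * x ^ (p - 1) * Real.exp (α * M ^ s)) =
      Real.exp (-(α * M ^ s)) *
        (lam * M ^ (q - l) + β * kk ^ b * x ^ (-b) * M ^ (a + b - l)) := by
  have hxne : ∀ y : ℝ, x ^ y ≠ 0 := fun y => (Real.rpow_pos_of_pos hx y).ne'
  have hMne : ∀ y : ℝ, M ^ y ≠ 0 := fun y => (Real.rpow_pos_of_pos hM y).ne'
  have hEexp : Real.exp (α * M ^ s) ≠ 0 := Real.exp_ne_zero _
  rw [Real.div_rpow hx.le hM.le, Real.div_rpow hx.le hM.le] at hE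
  have e1 : x ^ (q - 1) * x ^ (p - q) = x ^ (p - 1) := by
    rw [← Real.rpow_add hx]; ring_nf
  have e2 : x ^ (a - 1) * x ^ (p - (a + b)) = x ^ (p - 1) * x ^ (-b) := by
    rw [← Real.rpow_add hx, ← Real.rpow_add hx]; ring_nf
  have e3 : M ^ (q - l) * M ^ (p - q) = M ^ (p - l) := by
    rw [← Real.rpow_add hM]; ring_nf
  have e4 : M ^ (a + b - l) * M ^ (p - (a + b)) = M ^ (p - l) := by
    rw [← Real.rpow_add hM]; ring_nf
  have key : M ^ (p - l) = 2 * x ^ (p - 1) *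
      (lam * M ^ (q - l) + β * kk ^ b * x ^ (-b) * M ^ (a + b - l)) := by
    have h := congrArg (fun t => t * (2 * M ^ (p - l))) hE
    field_simp at h
    have key2 : M ^ (p - l) * (M ^ (p - q) * M ^ (p - (a + b))) =
        2 * x ^ (p - 1) * (lam * M ^ (q - l) + β * kk ^ b * x ^ (-b) * M ^ (a + b - l)) *
          (M ^ (p - q) * M ^ (p - (a + b))) := by
      linear_combination (-M ^ (p - l)) * h + 2 * lam * M ^ (p - (a+b)) * M ^ (p - l) * e1 -
        2 * lam * M ^ (p - (a+b)) * x ^ (p - 1) * e3 +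
        2 * β * kk ^ b * M ^ (p - q) * M ^ (p - l) * e2 -
        2 * β * kk ^ b * M ^ (p - q) * x ^ (p - 1) * x ^ (-b) * e4
    exact mul_right_cancel₀ (mul_ne_zero (hMne _) (hMne _)) key2
  rw [key, Real.exp_neg]
  field_simp

/-- Abstract form of Lemma 4.5 (third conclusion): under the same hypotheses,
`m(p) = M(p)^(p−l)/(2·φ(p)^(p−1)·e^(α·M(p)^s))` converges to
`(λ·D^(q−1) + β·D^(a−1))·D^(1−l)·e^(−α·D^s)` as `p → +∞`. -/
theorem stmt_9 (q a b lam β D l α s : ℝ) (hq : 1 ≤ q) (ha : 1 ≤ a) (hb : 0 < b)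
    (hlam : 0 < lam) (hβ : 0 < β) (hD : 0 < D) (hl : 1 ≤ l)
    (hα : 0 ≤ α) (hs : 0 ≤ s) (hr : q ≤ a + b)
    (φ k M : ℝ → ℝ)
    (hEq : ∀ᶠ p in Filter.atTop, 0 < φ p ∧ 0 < k p ∧ 0 < M p ∧
      lam * (φ p) ^ (q - 1) * (φ p / M p) ^ (p - q) +
        β * (φ p) ^ (a - 1) * (k p) ^ b * (φ p / M p) ^ (p - (a + b)) = 1 / 2)
    (hφ : Filter.Tendsto φ Filter.atTop (nhds D))
    (hk : Filter.Tendsto k Filter.atTop (nhds 1)) :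
    Filter.Tendsto
      (fun p => M p ^ (p - l) / (2 * φ p ^ (p - 1) * Real.exp (α * M p ^ s)))
      Filter.atTop
      (nhds ((lam * D ^ (q - 1) + β * D ^ (a - 1)) * D ^ (1 - l) *
        Real.exp (-(α * D ^ s)))) := by
  -- coefficient limits
  have hA : Tendsto (fun p => lam * φ p ^ (q - 1)) atTop (nhds (lam * D ^ (q - 1))) :=
    (hφ.rpow_const (Or.inl hD.ne')).const_mul lam
  have hB : Tendsto (fun p => β * φ p ^ (a - 1) * k p ^ b)
      atTop (nhds (β * D ^ (a - 1))) := by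
    have h1 : Tendsto (fun p => β * φ p ^ (a - 1)) atTop (nhds (β * D ^ (a - 1))) :=
      (hφ.rpow_const (Or.inl hD.ne')).const_mul β
    have h2 : Tendsto (fun p => k p ^ b) atTop (nhds ((1:ℝ) ^ b)) :=
      hk.rpow_const (Or.inl one_ne_zero)
    simpa using h1.mul h2
  have hLA : (0:ℝ) < lam * D ^ (q - 1) := by positivity
  have hLB : (0:ℝ) < β * D ^ (a - 1) := by positivity
  -- upper/lower squeeze functions
  have hCt : Tendsto (fun p => (2 * (lam * φ p ^ (q - 1)))⁻¹)
      atTop (nhds ((2 * (lam * D ^ (q - 1)))⁻¹)) :=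
    (hA.const_mul 2).inv₀ (by positivity)
  have hct : Tendsto
      (fun p => (2 * (lam * φ p ^ (q - 1) + β * φ p ^ (a - 1) * k p ^ b))⁻¹)
      atTop (nhds ((2 * (lam * D ^ (q - 1) + β * D ^ (a - 1)))⁻¹)) :=
    ((hA.add hB).const_mul 2).inv₀ (by positivity)
  have hhit : Tendsto
      (fun p => max 1 ((2 * (lam * φ p ^ (q - 1)))⁻¹ ^ (p - q)⁻¹)) atTop (nhds 1) := by
    have := (tendsto_const_nhds : Tendsto (fun _ : ℝ => (1:ℝ)) atTop (nhds 1)).max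
      (aux_rpow_inv_tendsto_one _ _ q (by positivity) hCt)
    simpa using this
  have hlot : Tendsto
      (fun p => min 1
        ((2 * (lam * φ p ^ (q - 1) + β * φ p ^ (a - 1) * k p ^ b))⁻¹ ^ (p - (a + b))⁻¹))
      atTop (nhds 1) := by
    have := (tendsto_const_nhds : Tendsto (fun _ : ℝ => (1:ℝ)) atTop (nhds 1)).min
      (aux_rpow_inv_tendsto_one _ _ (a + b) (by positivity) hct)
    simpa using this
  -- squeeze: φ/M → 1
  have hxt : Tendsto (fun p => φ p / M p) atTop (nhds 1) := by
    refine tendsto_of_tendsto_of_tendsto_of_le_of_le' hlot hhit ?_ ?_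
    · filter_upwards [hEq, eventually_gt_atTop (max q (a + b))] with p hp hgt
      obtain ⟨hφp, hkp, hMp, heq⟩ := hp
      have hpr : a + b < p := lt_of_le_of_lt (le_max_right _ _) hgt
      have hX : 0 < φ p / M p := div_pos hφp hMp
      by_cases hX1 : φ p / M p ≤ 1
      · have h1 : (φ p / M p) ^ (p - q) ≤ (φ p / M p) ^ (p - (a + b)) :=
          Real.rpow_le_rpow_of_exponent_ge hX hX1 (by linarith)
        have hApos : 0 < lam * φ p ^ (q - 1) := by positivity
        have hBpos : 0 < β * φ p ^ (a - 1) * k p ^ b := by positivity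
        have h12 : 1 / 2 ≤ (lam * φ p ^ (q - 1) + β * φ p ^ (a - 1) * k p ^ b) *
            (φ p / M p) ^ (p - (a + b)) := by
          nlinarith [mul_le_mul_of_nonneg_left h1 hApos.le]
        have hc : (2 * (lam * φ p ^ (q - 1) + β * φ p ^ (a - 1) * k p ^ b))⁻¹ ≤
            (φ p / M p) ^ (p - (a + b)) := by
          rw [← one_div, div_le_iff₀ (by positivity)]
          nlinarith
        have hfin : (2 * (lam * φ p ^ (q - 1) + β * φ p ^ (a - 1) * k p ^ b))⁻¹ ^
            (p - (a + b))⁻¹ ≤ φ p / M p := by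
          calc (2 * (lam * φ p ^ (q - 1) + β * φ p ^ (a - 1) * k p ^ b))⁻¹ ^
              (p - (a + b))⁻¹
              ≤ ((φ p / M p) ^ (p - (a + b))) ^ (p - (a + b))⁻¹ :=
                Real.rpow_le_rpow (by positivity) hc (inv_nonneg.mpr (by linarith))
            _ = φ p / M p := Real.rpow_rpow_inv hX.le (ne_of_gt (by linarith))
        exact le_trans (min_le_right _ _) hfin
      · exact le_trans (min_le_left _ _) (le_of_not_ge hX1)
    · filter_upwards [hEq, eventually_gt_atTop (max q (a + b))] with p hp hgt
      obtain ⟨hφp, hkp, hMp, heq⟩ := hp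
      have hpq : q < p := lt_of_le_of_lt (le_max_left _ _) hgt
      have hX : 0 < φ p / M p := div_pos hφp hMp
      by_cases hX1 : φ p / M p ≤ 1
      · exact le_trans hX1 (le_max_left _ _)
      · push_neg at hX1
        have hApos : 0 < lam * φ p ^ (q - 1) := by positivity
        have hBpos : 0 < β * φ p ^ (a - 1) * k p ^ b *
            (φ p / M p) ^ (p - (a + b)) := by positivity
        have hC : (φ p / M p) ^ (p - q) ≤ (2 * (lam * φ p ^ (q - 1)))⁻¹ := by
          rw [← one_div, le_div_iff₀ (by positivity)]
          nlinarith
        have hfin : φ p / M p ≤ (2 * (lam * φ p ^ (q - 1)))⁻¹ ^ (p - q)⁻¹ := by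
          calc φ p / M p = ((φ p / M p) ^ (p - q)) ^ (p - q)⁻¹ :=
              (Real.rpow_rpow_inv hX.le (ne_of_gt (by linarith))).symm
            _ ≤ (2 * (lam * φ p ^ (q - 1)))⁻¹ ^ (p - q)⁻¹ :=
              Real.rpow_le_rpow (by positivity) hC (inv_nonneg.mpr (by linarith))
        exact le_trans hfin (le_max_right _ _)
  -- M → D
  have hMt : Tendsto M atTop (nhds D) := by
    have h := hφ.div hxt one_ne_zero
    simp only [div_one] at h
    refine Tendsto.congr' ?_ h
    filter_upwards [hEq] with p hp
    obtain ⟨hφp, _, hMp, _⟩ := hp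
    simp only [Pi.div_apply]
    field_simp
  -- limit of the explicit formula
  have hg : Tendsto (fun p => Real.exp (-(α * M p ^ s)) *
      (lam * M p ^ (q - l) + β * k p ^ b * φ p ^ (-b) * M p ^ (a + b - l)))
      atTop (nhds (Real.exp (-(α * D ^ s)) *
      (lam * D ^ (q - l) + β * (1:ℝ) ^ b * D ^ (-b) * D ^ (a + b - l)))) := by
    refine Tendsto.mul ?_ ?_
    · exact (Real.continuous_exp.tendsto _).comp
        (((hMt.rpow_const (Or.inl hD.ne')).const_mul α).neg)
    · exact ((hMt.rpow_const (Or.inl hD.ne')).const_mul lam).add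
        ((((hk.rpow_const (Or.inl one_ne_zero)).const_mul β).mul
          (hφ.rpow_const (Or.inl hD.ne'))).mul (hMt.rpow_const (Or.inl hD.ne')))
  have hval : Real.exp (-(α * D ^ s)) *
      (lam * D ^ (q - l) + β * (1:ℝ) ^ b * D ^ (-b) * D ^ (a + b - l)) =
      (lam * D ^ (q - 1) + β * D ^ (a - 1)) * D ^ (1 - l) *
        Real.exp (-(α * D ^ s)) := by
    rw [Real.one_rpow]
    have d1 : D ^ (q - l) = D ^ (q - 1) * D ^ (1 - l) := by
      rw [← Real.rpow_add hD]; ring_nf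
    have d2 : D ^ (-b) * D ^ (a + b - l) = D ^ (a - 1) * D ^ (1 - l) := by
      rw [← Real.rpow_add hD, ← Real.rpow_add hD]; ring_nf
    linear_combination Real.exp (-(α * D ^ s)) * lam * d1 +
      Real.exp (-(α * D ^ s)) * β * d2
  rw [hval] at hg
  refine Tendsto.congr' ?_ hg
  filter_upwards [hEq] with p hp
  obtain ⟨hφp, hkp, hMp, heq⟩ := hp
  exact (key_id q a b lam β l α s p (φ p) (M p) (k p) hφp hMp heq).symm
end
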